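/- arXiv:2007.11861 — 2 statements merged into one kernel-verified Lean document; each statement's English description precedes it below -/
import Mathlib

section
/- Let P = (x_i) be a sequence in [0,1), let f be an interval exchange transformation of [0,1) with n intervals, and let P* = (f(x_i)). Then for every N, the star-discrepancies satisfy D*_N(P)/n ≤ D*_N(P*) ≤ n · D*_N(P). -/
open Set Finset

/-- Star-discrepancy of the first `N` points of a sequence in `[0,1)`. -/
noncomputable def starDisc (N : ℕ) (x : ℕ → ℝ) : ℝ :=
  sSup {d : ℝ | ∃ a ∈ Set.Icc (0:ℝ) 1,
    d = |(((Finset.range N).filter (fun i => x i < a)).card : ℝ) / N - a|}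

/-- Star-discrepancy of a finite point set in `[0,1)`. -/
noncomputable def starDiscP (N : ℕ) (x : Fin N → ℝ) : ℝ :=
  sSup {d : ℝ | ∃ a ∈ Set.Icc (0:ℝ) 1,
    d = |((Finset.univ.filter (fun i => x i < a)).card : ℝ) / N - a|}

/-- A sequence in `[0,1)` is a low-discrepancy sequence if `D_N^* = O(log N / N)`. -/
def LowDisc (x : ℕ → ℝ) : Prop :=
  ∃ C : ℝ, 0 < C ∧ ∀ N : ℕ, 2 ≤ N → starDisc N x ≤ C * Real.log N / N

/-- `f` is an interval exchange transformation of `[0,1)` with `n` intervals: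
a bijection of `[0,1)` which is a translation on each of `n` consecutive subintervals. -/
def IsIET (n : ℕ) (f : ℝ → ℝ) : Prop :=
  Set.BijOn f (Set.Ico 0 1) (Set.Ico 0 1) ∧
  ∃ Λ : Fin (n+1) → ℝ, Λ 0 = 0 ∧ Λ (Fin.last n) = 1 ∧ StrictMono Λ ∧
    ∀ i : Fin n, ∃ c : ℝ, ∀ x ∈ Set.Ico (Λ i.castSucc) (Λ i.succ), f x = x + c

/-- Abel-type bound: the anchored partial sums of `s i * (φ(i+1) - φ i)` are small. -/
lemma sumG (s φ : ℕ → ℝ) (D : ℝ) (hs : ∀ i, s i ∈ Set.Icc (0:ℝ) 1)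
    (hφ : ∀ j, |φ j| ≤ D) :
    ∀ p, 1 ≤ p → ∀ t ∈ Set.Icc (0:ℝ) 1,
      |∑ i ∈ Finset.range p, s i * (φ (i+1) - φ i) + s 0 * φ 0 - t * φ p| ≤ p * D := by
  intro p
  induction p with
  | zero => omega
  | succ p ih =>
    intro _ t ht
    rcases Nat.eq_or_lt_of_le (Nat.one_le_iff_ne_zero.mpr (Nat.succ_ne_zero p)) with h1 | h1
    · -- p = 0
      have hp0 : p = 0 := by omega
      subst hp0
      have : ∑ i ∈ Finset.range 1, s i * (φ (i+1) - φ i) + s 0 * φ 0 - t * φ 1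
          = (s 0 - t) * φ 1 := by
        simp [Finset.sum_range_one]; ring
      rw [this, abs_mul]
      have h2 : |s 0 - t| ≤ 1 := by
        rcases hs 0 with ⟨a1, a2⟩; rcases ht with ⟨b1, b2⟩
        rw [abs_le]; constructor <;> linarith
      calc |s 0 - t| * |φ 1| ≤ 1 * D := by
            apply mul_le_mul h2 (hφ 1) (abs_nonneg _) zero_le_one
        _ = 1 * D := by ring
        _ ≤ _ := by push_cast; nlinarith [ (abs_nonneg (φ 0)).trans (hφ 0)]
    · have hp1 : 1 ≤ p := by omega
      have key : ∑ i ∈ Finset.range (p+1), s i * (φ (i+1) - φ i) + s 0 * φ 0 - t * φ (p+1)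
          = (∑ i ∈ Finset.range p, s i * (φ (i+1) - φ i) + s 0 * φ 0 - s p * φ p)
            + (s p - t) * φ (p+1) := by
        rw [Finset.sum_range_succ]; ring
      rw [key]
      have h2 : |s p - t| ≤ 1 := by
        rcases hs p with ⟨a1, a2⟩; rcases ht with ⟨b1, b2⟩
        rw [abs_le]; constructor <;> linarith
      have h3 := ih hp1 (s p) (hs p)
      have h4 : |(s p - t) * φ (p+1)| ≤ 1 * D := by
        rw [abs_mul]
        exact mul_le_mul h2 (hφ (p+1)) (abs_nonneg _) zero_le_one
      have := abs_add_le (∑ i ∈ Finset.range p, s i * (φ (i+1) - φ i) + s 0 * φ 0 - s p * φ p)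
        ((s p - t) * φ (p+1))
      push_cast
      linarith
      

lemma keyLemma (n : ℕ) (hn : 1 ≤ n) (φ ψ : ℕ → ℝ) (D : ℝ)
    (hφ : ∀ j, |φ j| ≤ D) (hφ0 : φ 0 = 0) (hφn : φ n = 0)
    (p : ℕ) (hψp : |ψ p| ≤ D)
    (hs : ∀ i, i < n → i ≠ p → ψ i = φ i ∨ ψ i = φ (i+1)) :
    |∑ i ∈ Finset.range n, (ψ i - φ i)| ≤ n * D := by
  have hD : 0 ≤ D := le_trans (abs_nonneg _) (hφ 0)
  set s : ℕ → ℝ := fun i => if ψ i = φ (i+1) then 1 else 0 with hs_def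
  have hs01 : ∀ i, s i ∈ Set.Icc (0:ℝ) 1 := by
    intro i; simp only [hs_def]; split <;> simp
  have hterm : ∀ i, i < n → i ≠ p → ψ i - φ i = s i * (φ (i+1) - φ i) := by
    intro i hi hip
    simp only [hs_def]
    by_cases h : ψ i = φ (i+1)
    · rw [if_pos h, h]; ring
    · rw [if_neg h]
      rcases hs i hi hip with h' | h'
      · rw [h']; ring
      · exact absurd h' h
  by_cases hp : p < n
  · -- split the sum at p
    have hsplit : ∑ i ∈ Finset.range n, (ψ i - φ i)
        = (∑ i ∈ Finset.range p, (s i * (φ (i+1) - φ i)) + s 0 * φ 0 - 1 * φ p)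
          + ψ p
          + (∑ i ∈ Finset.Ico (p+1) n, s i * (φ (i+1) - φ i)) := by
      have h1 : Finset.range n = Finset.range (p+1) ∪ Finset.Ico (p+1) n := by
        rw [Finset.range_eq_Ico, Finset.range_eq_Ico]
        rw [Finset.Ico_union_Ico_eq_Ico (by omega) (by omega)]
      rw [h1, Finset.sum_union (by
        simp [Finset.disjoint_left]; intro a ha; omega)]
      rw [Finset.sum_range_succ]
      have h2 : ∑ i ∈ Finset.range p, (ψ i - φ i)
          = ∑ i ∈ Finset.range p, s i * (φ (i+1) - φ i) :=
        Finset.sum_congr rfl (fun i hi => by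
          rw [Finset.mem_range] at hi
          exact hterm i (by omega) (by omega))
      have h3 : ∑ i ∈ Finset.Ico (p+1) n, (ψ i - φ i)
          = ∑ i ∈ Finset.Ico (p+1) n, s i * (φ (i+1) - φ i) :=
        Finset.sum_congr rfl (fun i hi => by
          rw [Finset.mem_Ico] at hi
          exact hterm i (by omega) (by omega))
      rw [h2, h3]
      have hs0 : s 0 * φ 0 = 0 := by rw [hφ0]; ring
      rw [hs0]; ring
    -- bound the first bracket
    have hA : |∑ i ∈ Finset.range p, (s i * (φ (i+1) - φ i)) + s 0 * φ 0 - 1 * φ p|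
        ≤ p * D := by
      rcases Nat.eq_zero_or_pos p with h0 | h0
      · subst h0
        simp [hφ0]
      · exact sumG s φ D hs01 hφ p h0 1 (by norm_num)
    -- bound the third sum via reflection
    set m := n - (p+1) with hm_def
    have hC : |∑ i ∈ Finset.Ico (p+1) n, s i * (φ (i+1) - φ i)| ≤ m * D := by
      set s2 : ℕ → ℝ := fun k => s (n - 1 - k) with hs2
      set φ2 : ℕ → ℝ := fun k => φ (n - k) with hφ2
      have hIco : ∑ i ∈ Finset.Ico (p+1) n, s i * (φ (i+1) - φ i)
          = ∑ k ∈ Finset.range m, s (p+1+k) * (φ (p+1+k+1) - φ (p+1+k)) := by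
        rw [Finset.sum_Ico_eq_sum_range]
      have hrefl : ∑ k ∈ Finset.range m, s2 k * (φ2 (k+1) - φ2 k)
          = - ∑ k ∈ Finset.range m, s (p+1+k) * (φ (p+1+k+1) - φ (p+1+k)) := by
        rw [← Finset.sum_range_reflect (fun k => s2 k * (φ2 (k+1) - φ2 k)) m,
          ← Finset.sum_neg_distrib]
        apply Finset.sum_congr rfl
        intro k hk
        rw [Finset.mem_range] at hk
        simp only [hs2, hφ2]
        have e1 : n - 1 - (m - 1 - k) = p + 1 + k := by omega
        have e2 : n - (m - 1 - k + 1) = p + 1 + k := by omega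
        have e3 : n - (m - 1 - k) = p + 1 + k + 1 := by omega
        rw [e1, e2, e3]
        ring
      rcases Nat.eq_zero_or_pos m with hm0 | hm0
      · rw [hIco]
        simp [hm0]
      · have hg := sumG s2 φ2 D (fun i => hs01 _) (fun j => hφ _) m hm0 0 (by norm_num)
        have hφ20 : φ2 0 = 0 := by simp only [hφ2, Nat.sub_zero, hφn]
        rw [hφ20, hrefl] at hg
        rw [hIco]
        simp only [mul_zero, zero_mul, add_zero, sub_zero, abs_neg] at hg
        exact hg
    rw [hsplit]
    have htotal := abs_add_le (∑ i ∈ Finset.range p, (s i * (φ (i+1) - φ i)) + s 0 * φ 0 - 1 * φ p + ψ p)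
      (∑ i ∈ Finset.Ico (p+1) n, s i * (φ (i+1) - φ i))
    have htot2 := abs_add_le (∑ i ∈ Finset.range p, (s i * (φ (i+1) - φ i)) + s 0 * φ 0 - 1 * φ p) (ψ p)
    have hcast : (p : ℝ) + 1 + m = n := by
      have : p + 1 + m = n := by omega
      exact_mod_cast congrArg (Nat.cast : ℕ → ℝ) this
    nlinarith [hA, hC, hψp]
  · -- p ≥ n : no partial piece
    have hall : ∑ i ∈ Finset.range n, (ψ i - φ i)
        = ∑ i ∈ Finset.range n, s i * (φ (i+1) - φ i) :=
      Finset.sum_congr rfl (fun i hi => by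
        rw [Finset.mem_range] at hi
        exact hterm i hi (by omega))
    have hg := sumG s φ D hs01 hφ n hn 0 (by norm_num)
    rw [hφ0] at hg
    rw [hall]
    simp only [mul_zero, zero_mul, add_zero, sub_zero] at hg
    exact hg

lemma div_card_mem01 (N : ℕ) (y : ℕ → ℝ) (t : ℝ) :
    ((((Finset.range N).filter (fun i => y i < t)).card : ℝ) / N) ∈ Set.Icc (0:ℝ) 1 := by
  constructor
  · positivity
  · rcases Nat.eq_zero_or_pos N with h | h
    · subst h; simp
    · rw [div_le_one (by exact_mod_cast h)]
      exact_mod_cast (Finset.card_filter_le _ _).trans (by simp)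

lemma le_starDisc (N : ℕ) (y : ℕ → ℝ) (t : ℝ) (ht : t ∈ Set.Icc (0:ℝ) 1) :
    |(((Finset.range N).filter (fun i => y i < t)).card : ℝ) / N - t| ≤ starDisc N y := by
  apply le_csSup
  · refine ⟨2, ?_⟩
    rintro d ⟨a, ha, rfl⟩
    have h1 := div_card_mem01 N y a
    rw [abs_le]
    constructor <;> [skip; skip] <;>
      (rcases h1 with ⟨u1, u2⟩; rcases ha with ⟨v1, v2⟩) <;> linarith
  · exact ⟨t, ht, rfl⟩

lemma starDisc_nonneg (N : ℕ) (y : ℕ → ℝ) : 0 ≤ starDisc N y :=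
  (abs_nonneg _).trans (le_starDisc N y 0 ⟨le_refl _, zero_le_one⟩)

lemma starDisc_le (N : ℕ) (y : ℕ → ℝ) (B : ℝ)
    (h : ∀ a ∈ Set.Icc (0:ℝ) 1,
      |(((Finset.range N).filter (fun i => y i < a)).card : ℝ) / N - a| ≤ B) :
    starDisc N y ≤ B := by
  apply csSup_le
  · exact ⟨_, 0, ⟨le_refl _, zero_le_one⟩, rfl⟩
  · rintro d ⟨a, ha, rfl⟩
    exact h a ha

lemma card_lt_zero_eq (N : ℕ) (y : ℕ → ℝ) (hy : ∀ i, 0 ≤ y i) :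
    ((Finset.range N).filter (fun i => y i < 0)).card = 0 := by
  rw [Finset.card_eq_zero, Finset.filter_eq_empty_iff]
  exact fun i _ => not_lt.mpr (hy i)

lemma card_lt_one_eq (N : ℕ) (y : ℕ → ℝ) (hy : ∀ i, y i < 1) :
    ((Finset.range N).filter (fun i => y i < 1)).card = N := by
  rw [Finset.filter_true_of_mem (fun i _ => hy i), Finset.card_range]

lemma starDisc_zero (y : ℕ → ℝ) : starDisc 0 y = 1 := by
  have hset : {d : ℝ | ∃ a ∈ Set.Icc (0:ℝ) 1,
      d = |(((Finset.range 0).filter (fun i => y i < a)).card : ℝ) / ((0:ℕ):ℝ) - a|}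
      = Set.Icc (0:ℝ) 1 := by
    ext d
    simp only [Set.mem_setOf_eq, Finset.range_zero, Finset.filter_empty,
      Finset.card_empty, Nat.cast_zero, zero_div, zero_sub, abs_neg]
    constructor
    · rintro ⟨a, ha, rfl⟩
      rwa [abs_of_nonneg ha.1]
    · intro hd
      exact ⟨d, hd, (abs_of_nonneg hd.1).symm⟩
  rw [starDisc, hset, csSup_Icc zero_le_one]

lemma IsIET.one_le (n : ℕ) (f : ℝ → ℝ) (hf : IsIET n f) : 1 ≤ n := by
  obtain ⟨-, Λ, hΛ0, hΛ1, -, -⟩ := hf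
  rcases Nat.eq_zero_or_pos n with h0 | h; swap
  · exact h
  · subst h0
    rw [show (Fin.last 0) = 0 from rfl, hΛ0] at hΛ1
    norm_num at hΛ1

lemma starDisc_comp_le (n : ℕ) (f : ℝ → ℝ) (hf : IsIET n f)
    (x : ℕ → ℝ) (hx : ∀ i, x i ∈ Set.Ico (0:ℝ) 1) (N : ℕ) :
    starDisc N (fun i => f (x i)) ≤ n * starDisc N x := by
  have hn : 1 ≤ n := hf.one_le n f
  obtain ⟨hbij, Λ, hΛ0, hΛ1, hmono, hpieces⟩ := hf
  choose c hc using hpieces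
  rcases Nat.eq_zero_or_pos N with hN0 | hN
  · subst hN0
    rw [starDisc_zero, starDisc_zero]
    have : (1:ℝ) ≤ n := by exact_mod_cast hn
    linarith
  set D := starDisc N x with hD_def
  set A : ℝ → ℕ := fun t => ((Finset.range N).filter (fun i => x i < t)).card with hA_def
  set E : ℝ → ℝ := fun t => (A t : ℝ)/N - t with hE_def
  have hE : ∀ t ∈ Set.Icc (0:ℝ) 1, |E t| ≤ D := fun t ht => le_starDisc N x t ht
  have hE0 : E 0 = 0 := by
    simp only [hE_def, hA_def, card_lt_zero_eq N x (fun i => (hx i).1)]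
    simp
  have hE1 : E 1 = 0 := by
    simp only [hE_def, hA_def, card_lt_one_eq N x (fun i => (hx i).2)]
    rw [div_self (by exact_mod_cast hN.ne')]
    ring
  have hΛmem : ∀ j : Fin (n+1), Λ j ∈ Set.Icc (0:ℝ) 1 := fun j =>
    ⟨hΛ0 ▸ hmono.monotone (Fin.zero_le j), hΛ1 ▸ hmono.monotone (Fin.le_last j)⟩
  -- partition of [0,1) into the pieces
  have hpartition : ∀ t ∈ Set.Ico (0:ℝ) 1,
      ∃ j : Fin n, Λ j.castSucc ≤ t ∧ t < Λ j.succ := by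
    intro t ht
    classical
    set s : Finset (Fin (n+1)) := Finset.univ.filter (fun j => Λ j ≤ t) with hs_def
    have hne : s.Nonempty := ⟨0, by simp [hs_def, hΛ0, ht.1]⟩
    set jm := s.max' hne with hjm_def
    have hjm : Λ jm ≤ t := by
      have h := s.max'_mem hne
      have h2 : jm ∈ Finset.univ.filter (fun j => Λ j ≤ t) := h
      exact (Finset.mem_filter.mp h2).2
    have hlt : (jm : ℕ) < n := by
      rcases Nat.lt_or_ge (jm : ℕ) n with h | h
      · exact h
      · exfalso
        have hj : jm = Fin.last n := by
          apply Fin.ext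
          have := jm.isLt
          simp only [Fin.val_last]
          omega
        rw [hj, hΛ1] at hjm
        linarith [ht.2]
    refine ⟨⟨(jm : ℕ), hlt⟩, ?_, ?_⟩
    · have : Fin.castSucc (⟨(jm : ℕ), hlt⟩ : Fin n) = jm := by
        apply Fin.ext; simp
      rw [this]; exact hjm
    · by_contra hcon
      push_neg at hcon
      have hmem : (⟨(jm : ℕ), hlt⟩ : Fin n).succ ∈ s :=
        Finset.mem_filter.mpr ⟨Finset.mem_univ _, hcon⟩
      have := s.le_max' _ hmem
      rw [← hjm_def] at this
      rw [Fin.le_def] at this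
      simp only [Fin.val_succ] at this
      omega
  have huniq : ∀ t : ℝ, ∀ j k : Fin n, Λ j.castSucc ≤ t → t < Λ j.succ →
      Λ k.castSucc ≤ t → t < Λ k.succ → j = k := by
    have haux : ∀ t : ℝ, ∀ j k : Fin n, j < k → Λ j.castSucc ≤ t → t < Λ j.succ →
        Λ k.castSucc ≤ t → t < Λ k.succ → False := by
      intro t j k hjk hj1 hj2 hk1 hk2
      have hle : (j.succ : Fin (n+1)) ≤ k.castSucc := by
        rw [Fin.le_def]
        rw [Fin.lt_def] at hjk
        simp only [Fin.val_succ, Fin.coe_castSucc]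
        omega
      have := hmono.monotone hle
      linarith
    intro t j k hj1 hj2 hk1 hk2
    rcases lt_trichotomy j k with h | h | h
    · exact absurd (haux t j k h hj1 hj2 hk1 hk2) (by simp)
    · exact h
    · exact absurd (haux t k j h hk1 hk2 hj1 hj2) (by simp)
  have hpsub : ∀ j : Fin n, Set.Ico (Λ j.castSucc) (Λ j.succ) ⊆ Set.Ico (0:ℝ) 1 := by
    intro j t ⟨h1, h2⟩
    exact ⟨le_trans (hΛmem j.castSucc).1 h1, lt_of_lt_of_le h2 (hΛmem j.succ).2⟩
  -- images are disjoint
  have hIdisj : ∀ j k : Fin n, j ≠ k →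
      Disjoint (Set.Ico (Λ j.castSucc + c j) (Λ j.succ + c j))
               (Set.Ico (Λ k.castSucc + c k) (Λ k.succ + c k)) := by
    intro j k hjk
    rw [Set.disjoint_left]
    rintro z ⟨hj1, hj2⟩ ⟨hk1, hk2⟩
    have huj : z - c j ∈ Set.Ico (Λ j.castSucc) (Λ j.succ) := ⟨by linarith, by linarith⟩
    have huk : z - c k ∈ Set.Ico (Λ k.castSucc) (Λ k.succ) := ⟨by linarith, by linarith⟩
    have hfj : f (z - c j) = z := by rw [hc j _ huj]; ring
    have hfk : f (z - c k) = z := by rw [hc k _ huk]; ring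
    have heq := hbij.2.1 (hpsub j huj) (hpsub k huk) (hfj.trans hfk.symm)
    have hck : c j = c k := by
      have : z - c j = z - c k := heq
      linarith
    apply hjk
    refine huniq (z - c j) j k huj.1 huj.2 ?_ ?_
    · rw [hck]; exact huk.1
    · rw [hck]; exact huk.2
  apply starDisc_le
  intro a ha
  set w : Fin n → ℝ := fun j => min (Λ j.succ) (max (Λ j.castSucc) (a - c j)) with hw_def
  have hwlb : ∀ j, Λ j.castSucc ≤ w j := fun j =>
    le_min (le_of_lt (hmono (Fin.castSucc_lt_succ : j.castSucc < j.succ))) (le_max_left _ _)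
  have hwub : ∀ j, w j ≤ Λ j.succ := fun j => min_le_left _ _
  have hwmem : ∀ j, w j ∈ Set.Icc (0:ℝ) 1 := fun j =>
    ⟨le_trans (hΛmem j.castSucc).1 (hwlb j), le_trans (hwub j) (hΛmem j.succ).2⟩
  have hii : ∀ j : Fin n, ∀ t, Λ j.castSucc ≤ t → t < Λ j.succ → (f t < a ↔ t < w j) := by
    intro j t h1 h2
    rw [hc j t ⟨h1, h2⟩]
    constructor
    · intro h
      exact lt_min h2 (lt_of_lt_of_le (by linarith) (le_max_right _ _))
    · intro h
      have h3 : t < max (Λ j.castSucc) (a - c j) := lt_of_lt_of_le h (min_le_right _ _)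
      rcases le_or_gt (a - c j) (Λ j.castSucc) with hcase | hcase
      · rw [max_eq_left hcase] at h3; linarith
      · rw [max_eq_right hcase.le] at h3; linarith
  -- counting decomposition
  have hcount : (((Finset.range N).filter (fun i => f (x i) < a)).card : ℝ)
      = ∑ j : Fin n, ((A (w j) : ℝ) - (A (Λ j.castSucc) : ℝ)) := by
    classical
    have hdisjF : ∀ j ∈ (Finset.univ : Finset (Fin n)), ∀ k ∈ (Finset.univ : Finset (Fin n)),
        j ≠ k → Disjoint ((Finset.range N).filter (fun i => Λ j.castSucc ≤ x i ∧ x i < w j))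
          ((Finset.range N).filter (fun i => Λ k.castSucc ≤ x i ∧ x i < w k)) := by
      intro j _ k _ hjk
      rw [Finset.disjoint_left]
      intro i hij hik
      rw [Finset.mem_filter] at hij hik
      exact hjk (huniq (x i) j k hij.2.1 (lt_of_lt_of_le hij.2.2 (hwub j))
        hik.2.1 (lt_of_lt_of_le hik.2.2 (hwub k)))
    have hset : (Finset.range N).filter (fun i => f (x i) < a)
        = Finset.univ.biUnion (fun j : Fin n =>
            (Finset.range N).filter (fun i => Λ j.castSucc ≤ x i ∧ x i < w j)) := by
      ext i
      simp only [Finset.mem_biUnion, Finset.mem_filter, Finset.mem_univ, true_and]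
      constructor
      · rintro ⟨hiN, hfa⟩
        obtain ⟨j, hj1, hj2⟩ := hpartition (x i) (hx i)
        exact ⟨j, hiN, hj1, (hii j _ hj1 hj2).mp hfa⟩
      · rintro ⟨j, hiN, hj1, hj2⟩
        exact ⟨hiN, (hii j _ hj1 (lt_of_lt_of_le hj2 (hwub j))).mpr hj2⟩
    rw [hset, Finset.card_biUnion hdisjF, Nat.cast_sum]
    apply Finset.sum_congr rfl
    intro j _
    have hsub : (Finset.range N).filter (fun i => x i < Λ j.castSucc)
        ⊆ (Finset.range N).filter (fun i => x i < w j) := by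
      intro i hi
      rw [Finset.mem_filter] at hi ⊢
      exact ⟨hi.1, lt_of_lt_of_le hi.2 (hwlb j)⟩
    have hseteq : (Finset.range N).filter (fun i => Λ j.castSucc ≤ x i ∧ x i < w j)
        = ((Finset.range N).filter (fun i => x i < w j))
          \ ((Finset.range N).filter (fun i => x i < Λ j.castSucc)) := by
      ext i
      simp only [Finset.mem_filter, Finset.mem_sdiff, not_and, not_lt]
      constructor
      · rintro ⟨h1, h2, h3⟩; exact ⟨⟨h1, h3⟩, fun _ => h2⟩
      · rintro ⟨⟨h1, h3⟩, h4⟩; exact ⟨h1, h4 h1, h3⟩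
    rw [hseteq, Finset.card_sdiff_of_subset hsub, Nat.cast_sub (Finset.card_le_card hsub)]
  -- measure identity
  have hmeas : a = ∑ j : Fin n, (w j - Λ j.castSucc) := by
    have hsub2 : ∀ j : Fin n, Set.Ico (Λ j.castSucc + c j) (w j + c j)
        ⊆ Set.Ico (Λ j.castSucc + c j) (Λ j.succ + c j) := fun j =>
      Set.Ico_subset_Ico_right (by linarith [hwub j])
    have hset : Set.Ico (0:ℝ) a = ⋃ j : Fin n, Set.Ico (Λ j.castSucc + c j) (w j + c j) := by
      ext z
      simp only [Set.mem_iUnion, Set.mem_Ico]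
      constructor
      · rintro ⟨hz0, hza⟩
        have hz1 : z ∈ Set.Ico (0:ℝ) 1 := ⟨hz0, lt_of_lt_of_le hza ha.2⟩
        obtain ⟨t, ht, hft⟩ := hbij.2.2 hz1
        obtain ⟨j, hj1, hj2⟩ := hpartition t ht
        have hft2 : f t = t + c j := hc j t ⟨hj1, hj2⟩
        have htw : t < w j := (hii j t hj1 hj2).mp (by rw [hft]; exact hza)
        refine ⟨j, ?_, ?_⟩
        · rw [← hft, hft2]; linarith
        · rw [← hft, hft2]; linarith
      · rintro ⟨j, hz1, hz2⟩
        have ht : z - c j ∈ Set.Ico (Λ j.castSucc) (Λ j.succ) :=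
          ⟨by linarith, by linarith [hwub j]⟩
        have hfz : f (z - c j) = z := by rw [hc j _ ht]; ring
        have hz01 : z ∈ Set.Ico (0:ℝ) 1 := hfz ▸ hbij.1 (hpsub j ht)
        refine ⟨hz01.1, ?_⟩
        have h5 := (hii j _ ht.1 ht.2).mpr (by linarith : z - c j < w j)
        rw [hfz] at h5
        exact h5
    have hdisj2 : Pairwise (Function.onFun Disjoint
        (fun j : Fin n => Set.Ico (Λ j.castSucc + c j) (w j + c j))) := by
      intro j k hjk
      exact Set.disjoint_of_subset (hsub2 j) (hsub2 k) (hIdisj j k hjk)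
    have hvol := congrArg MeasureTheory.volume hset
    rw [MeasureTheory.measure_iUnion hdisj2 (fun j => measurableSet_Ico)] at hvol
    rw [Real.volume_Ico, sub_zero, tsum_fintype] at hvol
    have hterm : ∀ j : Fin n,
        MeasureTheory.volume (Set.Ico (Λ j.castSucc + c j) (w j + c j))
          = ENNReal.ofReal (w j - Λ j.castSucc) := by
      intro j; rw [Real.volume_Ico]; congr 1; ring
    rw [Finset.sum_congr rfl (fun j _ => hterm j)] at hvol
    rw [← ENNReal.ofReal_sum_of_nonneg (fun j _ => by linarith [hwlb j])] at hvol
    exact (ENNReal.ofReal_eq_ofReal_iff ha.1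
      (Finset.sum_nonneg (fun j _ => by linarith [hwlb j]))).mp hvol
  -- at most one partial piece
  have hpartial : ∀ j k : Fin n, Λ j.castSucc < w j → w j < Λ j.succ →
      Λ k.castSucc < w k → w k < Λ k.succ → j = k := by
    have hval : ∀ j : Fin n, Λ j.castSucc < w j → w j < Λ j.succ → w j = a - c j := by
      intro j h1 h2
      have hwj_eq : w j = min (Λ j.succ) (max (Λ j.castSucc) (a - c j)) := by rw [hw_def]
      have hm1 : w j = max (Λ j.castSucc) (a - c j) := by
        rcases min_cases (Λ j.succ) (max (Λ j.castSucc) (a - c j)) with ⟨h, h'⟩ | ⟨h, h'⟩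
        · rw [hwj_eq, h] at h2; exact absurd h2 (lt_irrefl _)
        · rw [hwj_eq, h]
      rcases max_cases (Λ j.castSucc) (a - c j) with ⟨h, h'⟩ | ⟨h, h'⟩
      · rw [hm1, h] at h1; exact absurd h1 (lt_irrefl _)
      · rw [hm1, h]
    intro j k hj1 hj2 hk1 hk2
    by_contra hne
    have haj : a ∈ Set.Ico (Λ j.castSucc + c j) (Λ j.succ + c j) := by
      have := hval j hj1 hj2
      constructor
      · rw [this] at hj1; linarith
      · rw [this] at hj2; linarith
    have hak : a ∈ Set.Ico (Λ k.castSucc + c k) (Λ k.succ + c k) := by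
      have := hval k hk1 hk2
      constructor
      · rw [this] at hk1; linarith
      · rw [this] at hk2; linarith
    exact Set.disjoint_left.mp (hIdisj j k hne) haj hak
  -- set up keyLemma data
  set φ : ℕ → ℝ := fun j => E (Λ ⟨min j n, by omega⟩) with hφ_def
  set ψ : ℕ → ℝ := fun i => if h : i < n then E (w ⟨i, h⟩) else 0 with hψ_def
  set p : ℕ := if h : ∃ j : Fin n, Λ j.castSucc < w j ∧ w j < Λ j.succ
    then (Classical.choose h : Fin n).val else n with hp_def
  have hφb : ∀ j, |φ j| ≤ D := fun j => hE _ (hΛmem _)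
  have hφ0 : φ 0 = 0 := by
    have h0 : (⟨min 0 n, by omega⟩ : Fin (n+1)) = 0 := by
      apply Fin.ext; simp
    simp only [hφ_def, h0, hΛ0, hE0]
  have hφn : φ n = 0 := by
    have h0 : (⟨min n n, by omega⟩ : Fin (n+1)) = Fin.last n := by
      apply Fin.ext; simp [Fin.last]
    simp only [hφ_def, h0, hΛ1, hE1]
  have hψp : |ψ p| ≤ D := by
    simp only [hp_def, hψ_def]
    split
    · rename_i hex
      set j0 := Classical.choose hex
      rw [dif_pos j0.isLt]
      simpa [Fin.eta] using hE _ (hwmem j0)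
    · rw [dif_neg (by omega)]
      simpa using starDisc_nonneg N x
  have hs : ∀ i, i < n → i ≠ p → ψ i = φ i ∨ ψ i = φ (i+1) := by
    intro i hi hip
    set j : Fin n := ⟨i, hi⟩ with hj_def
    have hnotpartial : ¬ (Λ j.castSucc < w j ∧ w j < Λ j.succ) := by
      intro ⟨h1, h2⟩
      apply hip
      have hex : ∃ j : Fin n, Λ j.castSucc < w j ∧ w j < Λ j.succ := ⟨j, h1, h2⟩
      rw [hp_def, dif_pos hex]
      have := hpartial j (Classical.choose hex) h1 h2
        (Classical.choose_spec hex).1 (Classical.choose_spec hex).2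
      exact congrArg Fin.val this
    have hcs : Λ ⟨min i n, by omega⟩ = Λ j.castSucc := by congr 1; apply Fin.ext; simp [hj_def]; omega
    have hsc : Λ ⟨min (i+1) n, by omega⟩ = Λ j.succ := by congr 1; apply Fin.ext; simp [hj_def]; omega
    rcases eq_or_lt_of_le (hwlb j) with heq | hlt
    · left
      simp only [hψ_def, hφ_def, dif_pos hi, hcs]
      rw [← heq]
    · right
      have : w j = Λ j.succ := by
        rcases eq_or_lt_of_le (hwub j) with h' | h'
        · exact h'
        · exact absurd ⟨hlt, h'⟩ hnotpartial
      simp only [hψ_def, hφ_def, dif_pos hi, hsc, this]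
      rw [← this]
  have hkey := keyLemma n hn φ ψ D hφb hφ0 hφn p hψp hs
  -- final computation
  have hEq : (((Finset.range N).filter (fun i => f (x i) < a)).card : ℝ) / N - a
      = ∑ i ∈ Finset.range n, (ψ i - φ i) := by
    rw [← Fin.sum_univ_eq_sum_range (fun i => ψ i - φ i) n]
    have hterm : ∀ j : Fin n, ψ j.val - φ j.val = E (w j) - E (Λ j.castSucc) := by
      intro j
      have hcs : Λ ⟨min j.val n, by omega⟩ = Λ j.castSucc := by
        congr 1; apply Fin.ext; have := j.isLt; simp only [Fin.coe_castSucc]; omega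
      simp only [hψ_def, hφ_def, dif_pos j.isLt, Fin.eta, hcs]
    rw [Finset.sum_congr rfl (fun j _ => hterm j)]
    rw [hcount]
    rw [hmeas]
    rw [Finset.sum_div, ← Finset.sum_sub_distrib]
    apply Finset.sum_congr rfl
    intro j _
    simp only [hE_def]
    ring
  rw [hEq]
  exact hkey

lemma isIET_inv (n : ℕ) (f : ℝ → ℝ) (hf : IsIET n f) :
    IsIET n (Function.invFunOn f (Set.Ico 0 1)) ∧
    ∀ t ∈ Set.Ico (0:ℝ) 1, Function.invFunOn f (Set.Ico 0 1) (f t) = t := by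
  classical
  have hn : 1 ≤ n := hf.one_le n f
  obtain ⟨hbij, Λ, hΛ0, hΛ1, hmono, hpieces⟩ := hf
  choose c hc using hpieces
  set g := Function.invFunOn f (Set.Ico 0 1) with hg_def
  have hinv : Set.InvOn g f (Set.Ico 0 1) (Set.Ico 0 1) := hbij.invOn_invFunOn
  have hleft : ∀ t ∈ Set.Ico (0:ℝ) 1, g (f t) = t := fun t ht => hinv.1 ht
  have hgbij : Set.BijOn g (Set.Ico 0 1) (Set.Ico 0 1) := Set.BijOn.symm hinv.symm hbij
  have hΛmem : ∀ j : Fin (n+1), Λ j ∈ Set.Icc (0:ℝ) 1 := fun j =>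
    ⟨hΛ0 ▸ hmono.monotone (Fin.zero_le j), hΛ1 ▸ hmono.monotone (Fin.le_last j)⟩
  have hpsub : ∀ j : Fin n, Set.Ico (Λ j.castSucc) (Λ j.succ) ⊆ Set.Ico (0:ℝ) 1 := by
    rintro j t ⟨h1, h2⟩
    exact ⟨le_trans (hΛmem j.castSucc).1 h1, lt_of_lt_of_le h2 (hΛmem j.succ).2⟩
  have hpartition : ∀ t ∈ Set.Ico (0:ℝ) 1,
      ∃ j : Fin n, Λ j.castSucc ≤ t ∧ t < Λ j.succ := by
    intro t ht
    classical
    set s : Finset (Fin (n+1)) := Finset.univ.filter (fun j => Λ j ≤ t) with hs_def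
    have hne : s.Nonempty := ⟨0, by simp [hs_def, hΛ0, ht.1]⟩
    set jm := s.max' hne with hjm_def
    have hjm : Λ jm ≤ t := by
      have h := s.max'_mem hne
      have h2 : jm ∈ Finset.univ.filter (fun j => Λ j ≤ t) := h
      exact (Finset.mem_filter.mp h2).2
    have hlt : (jm : ℕ) < n := by
      rcases Nat.lt_or_ge (jm : ℕ) n with h | h
      · exact h
      · exfalso
        have hj : jm = Fin.last n := by
          apply Fin.ext
          have := jm.isLt
          simp only [Fin.val_last]
          omega
        rw [hj, hΛ1] at hjm
        linarith [ht.2]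
    refine ⟨⟨(jm : ℕ), hlt⟩, ?_, ?_⟩
    · have : Fin.castSucc (⟨(jm : ℕ), hlt⟩ : Fin n) = jm := by
        apply Fin.ext; simp
      rw [this]; exact hjm
    · by_contra hcon
      push_neg at hcon
      have hmem : (⟨(jm : ℕ), hlt⟩ : Fin n).succ ∈ s :=
        Finset.mem_filter.mpr ⟨Finset.mem_univ _, hcon⟩
      have := s.le_max' _ hmem
      rw [← hjm_def] at this
      rw [Fin.le_def] at this
      simp only [Fin.val_succ] at this
      omega
  have huniq : ∀ t : ℝ, ∀ j k : Fin n, Λ j.castSucc ≤ t → t < Λ j.succ →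
      Λ k.castSucc ≤ t → t < Λ k.succ → j = k := by
    have haux : ∀ t : ℝ, ∀ j k : Fin n, j < k → Λ j.castSucc ≤ t → t < Λ j.succ →
        Λ k.castSucc ≤ t → t < Λ k.succ → False := by
      intro t j k hjk hj1 hj2 hk1 hk2
      have hle : (j.succ : Fin (n+1)) ≤ k.castSucc := by
        rw [Fin.le_def]
        rw [Fin.lt_def] at hjk
        simp only [Fin.val_succ, Fin.coe_castSucc]
        omega
      have := hmono.monotone hle
      linarith
    intro t j k hj1 hj2 hk1 hk2
    rcases lt_trichotomy j k with h | h | h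
    · exact absurd (haux t j k h hj1 hj2 hk1 hk2) (by simp)
    · exact h
    · exact absurd (haux t k j h hk1 hk2 hj1 hj2) (by simp)
  set e : Fin n → ℝ := fun j => Λ j.castSucc + c j with he_def
  set r : Fin n → ℝ := fun j => Λ j.succ + c j with hr_def
  have helr : ∀ j, e j < r j := by
    intro j
    have := hmono (Fin.castSucc_lt_succ : j.castSucc < j.succ)
    simp only [he_def, hr_def]
    linarith
  have hIdisj : ∀ j k : Fin n, j ≠ k →
      Disjoint (Set.Ico (e j) (r j)) (Set.Ico (e k) (r k)) := by
    intro j k hjk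
    rw [Set.disjoint_left]
    rintro z ⟨hj1, hj2⟩ ⟨hk1, hk2⟩
    simp only [he_def, hr_def] at hj1 hj2 hk1 hk2
    have huj : z - c j ∈ Set.Ico (Λ j.castSucc) (Λ j.succ) := ⟨by linarith, by linarith⟩
    have huk : z - c k ∈ Set.Ico (Λ k.castSucc) (Λ k.succ) := ⟨by linarith, by linarith⟩
    have hfj : f (z - c j) = z := by rw [hc j _ huj]; ring
    have hfk : f (z - c k) = z := by rw [hc k _ huk]; ring
    have heq := hbij.2.1 (hpsub j huj) (hpsub k huk) (hfj.trans hfk.symm)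
    have hck : c j = c k := by
      have : z - c j = z - c k := heq
      linarith
    apply hjk
    refine huniq (z - c j) j k huj.1 huj.2 ?_ ?_
    · rw [hck]; exact huk.1
    · rw [hck]; exact huk.2
  have hIsub : ∀ j : Fin n, Set.Ico (e j) (r j) ⊆ Set.Ico (0:ℝ) 1 := by
    rintro j z ⟨h1, h2⟩
    have ht : z - c j ∈ Set.Ico (Λ j.castSucc) (Λ j.succ) := by
      simp only [he_def] at h1
      simp only [hr_def] at h2
      exact ⟨by linarith, by linarith⟩
    have hfz : f (z - c j) = z := by rw [hc j _ ht]; ring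
    exact hfz ▸ hbij.1 (hpsub j ht)
  have hbounds : ∀ j : Fin n, 0 ≤ e j ∧ r j ≤ 1 := fun j =>
    (Set.Ico_subset_Ico_iff (helr j)).mp (hIsub j)
  have hcover : ∀ z ∈ Set.Ico (0:ℝ) 1, ∃ j : Fin n, z ∈ Set.Ico (e j) (r j) := by
    intro z hz
    obtain ⟨t, ht, hft⟩ := hbij.2.2 hz
    obtain ⟨j, hj1, hj2⟩ := hpartition t ht
    have hft2 : f t = t + c j := hc j t ⟨hj1, hj2⟩
    refine ⟨j, ?_, ?_⟩
    · rw [← hft, hft2]; simp only [he_def]; linarith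
    · rw [← hft, hft2]; simp only [hr_def]; linarith
  have hglue : ∀ j : Fin n, ∀ z ∈ Set.Ico (e j) (r j), g z = z - c j := by
    rintro j z ⟨h1, h2⟩
    have ht : z - c j ∈ Set.Ico (Λ j.castSucc) (Λ j.succ) := by
      simp only [he_def] at h1
      simp only [hr_def] at h2
      exact ⟨by linarith, by linarith⟩
    have hfz : f (z - c j) = z := by rw [hc j _ ht]; ring
    have h5 := hleft _ (hpsub j ht)
    rw [hfz] at h5
    exact h5
  have heinj : Function.Injective e := by
    intro j k hjk
    by_contra hne
    have h1 : e j ∈ Set.Ico (e j) (r j) := ⟨le_refl _, helr j⟩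
    have h2 : e j ∈ Set.Ico (e k) (r k) := ⟨hjk.ge, by rw [hjk]; exact helr k⟩
    exact Set.disjoint_left.mp (hIdisj j k hne) h1 h2
  set s : Finset ℝ := Finset.univ.image e with hs_def
  have hcard : s.card = n := by
    rw [hs_def, Finset.card_image_of_injective _ heinj, Finset.card_univ, Fintype.card_fin]
  set b : Fin n → ℝ := fun k => ((Finset.orderIsoOfFin s hcard) k : ℝ) with hb_def
  have hbmono : StrictMono b := fun k l h => by
    exact_mod_cast (Finset.orderIsoOfFin s hcard).strictMono h
  have hbmem : ∀ k, b k ∈ s := fun k => ((Finset.orderIsoOfFin s hcard) k).2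
  have hbsurj : ∀ z ∈ s, ∃ k, b k = z := by
    intro z hz
    exact ⟨(Finset.orderIsoOfFin s hcard).symm ⟨z, hz⟩, by
      simp only [hb_def, OrderIso.apply_symm_apply]⟩
  have hbe : ∀ k, ∃ j : Fin n, e j = b k := by
    intro k
    have := hbmem k
    rw [hs_def, Finset.mem_image] at this
    obtain ⟨j, _, hj⟩ := this
    exact ⟨j, hj⟩
  choose σ hσ using hbe
  have hes : ∀ j : Fin n, e j ∈ s := by
    intro j; rw [hs_def, Finset.mem_image]; exact ⟨j, Finset.mem_univ _, rfl⟩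
  set Λ' : Fin (n+1) → ℝ := fun k => if h : (k:ℕ) < n then b ⟨k, h⟩ else 1 with hΛ'_def
  have hΛ'cs : ∀ k : Fin n, Λ' k.castSucc = b k := by
    intro k
    simp only [hΛ'_def, Fin.coe_castSucc, dif_pos k.isLt, Fin.eta]
  -- adjacency
  have hadj : ∀ k : Fin n, Λ' k.succ = r (σ k) := by
    intro k
    have hrle : r (σ k) ≤ 1 := (hbounds (σ k)).2
    have hsuccval : (k.succ : ℕ) = (k : ℕ) + 1 := rfl
    rcases eq_or_lt_of_le hrle with hreq | hrlt
    · -- r (σ k) = 1 : k must be the last index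
      have hk1n : ¬ ((k:ℕ) + 1 < n) := by
        intro h
        set m := σ ⟨(k:ℕ)+1, h⟩ with hm_def
        have hem : e m = b ⟨(k:ℕ)+1, h⟩ := hσ _
        have hgt : b k < b ⟨(k:ℕ)+1, h⟩ := hbmono (by simp [Fin.lt_def])
        rw [← hσ k, ← hem] at hgt
        have hmne : m ≠ σ k := by
          intro hcon
          rw [hcon] at hgt
          exact lt_irrefl _ hgt
        have hnotin : e m ∉ Set.Ico (e (σ k)) (r (σ k)) :=
          Set.disjoint_left.mp (hIdisj m (σ k) hmne) ⟨le_refl _, helr m⟩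
        rw [Set.mem_Ico, not_and, not_lt] at hnotin
        have hlt1 : e m < 1 := (hIsub m ⟨le_refl _, helr m⟩).2
        have := hnotin hgt.le
        rw [hreq] at this
        linarith
      simp only [hΛ'_def, hsuccval, dif_neg hk1n]
      exact hreq.symm
    · -- r (σ k) < 1
      have hr0 : 0 ≤ r (σ k) := le_trans (hbounds (σ k)).1 (helr (σ k)).le
      obtain ⟨m, hm⟩ := hcover (r (σ k)) ⟨hr0, hrlt⟩
      have hmne : m ≠ σ k := by
        intro hcon
        rw [hcon] at hm
        exact lt_irrefl _ hm.2
      have hem : e m = r (σ k) := by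
        rcases eq_or_lt_of_le hm.1 with h | h
        · exact h
        · exfalso
          have h1 : e m ∉ Set.Ico (e (σ k)) (r (σ k)) :=
            Set.disjoint_left.mp (hIdisj m (σ k) hmne) ⟨le_refl _, helr m⟩
          rw [Set.mem_Ico, not_and, not_lt] at h1
          have h2 : e m < e (σ k) := by
            by_contra hcon
            push_neg at hcon
            linarith [h1 hcon]
          have h3 : e (σ k) ∈ Set.Ico (e m) (r m) :=
            ⟨h2.le, lt_trans (helr (σ k)) hm.2⟩
          exact Set.disjoint_left.mp (hIdisj m (σ k) hmne) h3 ⟨le_refl _, helr (σ k)⟩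
      obtain ⟨l, hl⟩ := hbsurj (e m) (hes m)
      have hbkl : b k < b l := by
        rw [hl, hem, ← hσ k]
        exact helr (σ k)
      have hkl : k < l := hbmono.lt_iff_lt.mp hbkl
      have hk1 : (k:ℕ) + 1 < n := by
        have h1 := l.isLt
        rw [Fin.lt_def] at hkl
        omega
      have hble : b ⟨(k:ℕ)+1, hk1⟩ ≤ b l := by
        apply hbmono.monotone
        rw [Fin.le_def]
        rw [Fin.lt_def] at hkl
        simpa using hkl
      have hgt : b k < b ⟨(k:ℕ)+1, hk1⟩ := hbmono (by simp [Fin.lt_def])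
      set m' := σ ⟨(k:ℕ)+1, hk1⟩ with hm'_def
      have hem' : e m' = b ⟨(k:ℕ)+1, hk1⟩ := hσ _
      have hm'ne : m' ≠ σ k := by
        intro hcon
        have : e m' = e (σ k) := by rw [hcon]
        rw [hem', hσ k] at this
        rw [this] at hgt
        exact lt_irrefl _ hgt
      have hnotin : e m' ∉ Set.Ico (e (σ k)) (r (σ k)) :=
        Set.disjoint_left.mp (hIdisj m' (σ k) hm'ne) ⟨le_refl _, helr m'⟩
      rw [Set.mem_Ico, not_and, not_lt] at hnotin
      have hge : r (σ k) ≤ b ⟨(k:ℕ)+1, hk1⟩ := by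
        rw [← hem']
        apply hnotin
        rw [hem', hσ k]
        exact hgt.le
      have hfin : b ⟨(k:ℕ)+1, hk1⟩ = r (σ k) := by
        rw [hl, hem] at hble
        linarith
      simp only [hΛ'_def, hsuccval, dif_pos hk1]
      exact hfin
  have hΛ'0 : Λ' 0 = 0 := by
    have h0n : (0:ℕ) < n := hn
    have hval : ((0 : Fin (n+1)) : ℕ) = 0 := rfl
    simp only [hΛ'_def, hval, dif_pos h0n]
    obtain ⟨j, hj⟩ := hcover 0 ⟨le_refl _, zero_lt_one⟩
    have hej : e j = 0 := le_antisymm hj.1 (hbounds j).1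
    obtain ⟨l, hl⟩ := hbsurj (e j) (hes j)
    apply le_antisymm
    · have := hbmono.monotone (by rw [Fin.le_def]; exact Nat.zero_le _ : (⟨0, h0n⟩ : Fin n) ≤ l)
      rw [hl, hej] at this
      exact this
    · obtain ⟨j', -, hj'⟩ := Finset.mem_image.mp (hbmem ⟨0, h0n⟩)
      rw [← hj']
      exact (hbounds j').1
  have hΛ'1 : Λ' (Fin.last n) = 1 := by
    simp only [hΛ'_def, Fin.val_last, dif_neg (lt_irrefl n)]
  have hΛ'mono : StrictMono Λ' := by
    rw [Fin.strictMono_iff_lt_succ]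
    intro k
    rw [hΛ'cs k, hadj k, ← hσ k]
    exact helr (σ k)
  refine ⟨⟨hgbij, Λ', hΛ'0, hΛ'1, hΛ'mono, ?_⟩, hleft⟩
  intro k
  refine ⟨-(c (σ k)), ?_⟩
  intro z hz
  rw [hΛ'cs k, hadj k, ← hσ k] at hz
  rw [hglue (σ k) z hz]
  ring

/-- For a sequence `P` in `[0,1)` and an IET `f` with `n` intervals,
`D_N^*(P)/n ≤ D_N^*(f(P)) ≤ n · D_N^*(P)` for every `N`. -/
theorem starDisc_conj_bounds (n : ℕ) (f : ℝ → ℝ) (hf : IsIET n f)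
    (x : ℕ → ℝ) (hx : ∀ i, x i ∈ Set.Ico (0:ℝ) 1) (N : ℕ) :
    starDisc N x / n ≤ starDisc N (fun i => f (x i)) ∧
      starDisc N (fun i => f (x i)) ≤ n * starDisc N x := by
  have hn : 1 ≤ n := hf.one_le n f
  constructor
  · obtain ⟨hgIET, hgf⟩ := isIET_inv n f hf
    have hmaps : ∀ i, f (x i) ∈ Set.Ico (0:ℝ) 1 := fun i => hf.1.mapsTo (hx i)
    have h1 : starDisc N x
        = starDisc N (fun i => Function.invFunOn f (Set.Ico 0 1) (f (x i))) := by
      congr 1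
      funext i
      exact (hgf (x i) (hx i)).symm
    have h2 := starDisc_comp_le n _ hgIET (fun i => f (x i)) hmaps N
    rw [div_le_iff₀ (by exact_mod_cast hn : (0:ℝ) < n)]
    rw [h1]
    calc starDisc N (fun i => Function.invFunOn f (Set.Ico 0 1) (f (x i)))
        ≤ n * starDisc N (fun i => f (x i)) := h2
      _ = starDisc N (fun i => f (x i)) * n := mul_comm _ _
  · exact starDisc_comp_le n f hf x hx N
end

section
/- Let N ≥ 2 and define x_i = 1/N + (i−1)(N−2)/(N(N−1)) for i = 1,…,N. Then the star-discrepancy of the point set {x_1,…,x_N} equals 1/N. Moreover, if f: [0,1) → [0,1) is the interval exchange transformation that swaps the two intervals [0,1/N) and [1/N,1) (i.e. f(x) = x + (N−1)/N for x ∈ [0,1/N) and f(x) = x − 1/N otherwise), then the star-discrepancy of {f(x_1),…,f(x_N)} equals 2/N. -/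
open Set Finset

lemma cnt_le {N : ℕ} (y : Fin N → ℝ) (hm : Monotone y) (a : ℝ) (j : Fin N)
    (hj : a ≤ y j) : ((Finset.univ.filter (fun i => y i < a)).card : ℕ) ≤ j := by
  have hsub : (Finset.univ.filter (fun i => y i < a)) ⊆ Finset.Iio j := by
    intro i hi
    simp only [Finset.mem_filter] at hi
    rw [Finset.mem_Iio]
    by_contra hij
    push_neg at hij
    exact absurd (hm hij) (by linarith [hi.2])
  have := Finset.card_le_card hsub
  rwa [Fin.card_Iio] at this

lemma le_cnt {N : ℕ} (y : Fin N → ℝ) (hm : Monotone y) (a : ℝ) (j : Fin N)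
    (hj : y j < a) : (j : ℕ) + 1 ≤ ((Finset.univ.filter (fun i => y i < a)).card : ℕ) := by
  have hsub : Finset.Iic j ⊆ (Finset.univ.filter (fun i => y i < a)) := by
    intro i hi
    rw [Finset.mem_Iic] at hi
    simp only [Finset.mem_filter, Finset.mem_univ, true_and]
    exact lt_of_le_of_lt (hm hi) hj
  have := Finset.card_le_card hsub
  rwa [Fin.card_Iic] at this


/-- For `N ≥ 2` and `x_i = 1/N + (i−1)(N−2)/(N(N−1))` (here 0-indexed), the
star-discrepancy of `{x_1,…,x_N}` is `1/N`; after applying the IET swapping `[0,1/N)` and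
`[1/N,1)`, the star-discrepancy becomes `2/N`. -/
theorem starDisc_sharp_two_intervals (N : ℕ) (hN : 2 ≤ N)
    (x : Fin N → ℝ) (hx : ∀ i : Fin N, x i = 1/N + (i : ℝ) * (N - 2) / (N * (N - 1)))
    (f : ℝ → ℝ)
    (hf : ∀ y : ℝ, f y = if y < 1/N then y + (N - 1)/N else y - 1/N) :
    starDiscP N x = 1/N ∧ starDiscP N (fun i => f (x i)) = 2/N := by
  have hn2 : (2:ℝ) ≤ N := by exact_mod_cast hN
  have hn0 : (0:ℝ) < N := by linarith
  have hn1 : (0:ℝ) < (N:ℝ) - 1 := by linarith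
  have hD : (0:ℝ) < (N:ℝ) * ((N:ℝ) - 1) := by positivity
  -- monotonicity of x
  have hmx : Monotone x := by
    intro i j hij
    rw [hx i, hx j]
    have : ((i:ℕ):ℝ) ≤ ((j:ℕ):ℝ) := by exact_mod_cast hij
    have h2 : (0:ℝ) ≤ (N:ℝ) - 2 := by linarith
    gcongr
  -- x i ≥ 1/N
  have hxge : ∀ i : Fin N, 1/(N:ℝ) ≤ x i := by
    intro i
    rw [hx i]
    have : (0:ℝ) ≤ (i : ℝ) * ((N:ℝ) - 2) / ((N:ℝ) * ((N:ℝ) - 1)) := by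
      have h2 : (0:ℝ) ≤ (N:ℝ) - 2 := by linarith
      positivity
    linarith
  -- formula for f ∘ x
  have hy : ∀ i : Fin N, f (x i) = (i : ℝ) * ((N:ℝ) - 2) / ((N:ℝ) * ((N:ℝ) - 1)) := by
    intro i
    rw [hf, if_neg (not_lt.mpr (hxge i)), hx i]
    ring
  have hmy : Monotone (fun i => f (x i)) := by
    intro i j hij
    simp only [hy]
    have : ((i:ℕ):ℝ) ≤ ((j:ℕ):ℝ) := by exact_mod_cast hij
    have h2 : (0:ℝ) ≤ (N:ℝ) - 2 := by linarith
    gcongr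
  -- uniform bound part 1
  have bound1 : ∀ a ∈ Set.Icc (0:ℝ) 1,
      |((Finset.univ.filter (fun i => x i < a)).card : ℝ) / N - a| ≤ 1/N := by
    rintro a ⟨ha0, ha1⟩
    set k := (Finset.univ.filter (fun i => x i < a)).card with hk
    have hkN : k ≤ N := le_trans (Finset.card_le_univ _) (by simp)
    rw [abs_le]
    constructor
    · -- a - k/N ≤ 1/N
      rcases eq_or_lt_of_le hkN with h | h
      · have : ((k:ℝ)) = N := by exact_mod_cast h
        rw [this]
        rw [div_self (ne_of_gt hn0)]
        have : (0:ℝ) < 1/N := by positivity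
        linarith
      · have hax : a ≤ x ⟨k, h⟩ := by
          by_contra hc
          push_neg at hc
          have := le_cnt x hmx a ⟨k, h⟩ hc
          simp only [Fin.val_mk] at this
          omega
        rw [hx] at hax
        simp only at hax
        have key : ((k:ℝ)) * ((N:ℝ) - 2) / ((N:ℝ) * ((N:ℝ) - 1)) ≤ (k:ℝ)/N := by
          rw [div_le_div_iff₀ hD hn0]
          have hk0 : (0:ℝ) ≤ (k:ℝ) := by positivity
          nlinarith
        have h1N : (0:ℝ) < 1/N := by positivity
        linarith
    · -- k/N - a ≤ 1/N
      rcases Nat.eq_zero_or_pos k with h | h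
      · rw [h]
        have h1 : (0:ℝ) < 1/N := by positivity
        rw [Nat.cast_zero, zero_div]
        linarith
      · have hk1 : k - 1 < N := by omega
        have hax : x ⟨k-1, hk1⟩ < a := by
          by_contra hc
          push_neg at hc
          have := cnt_le x hmx a ⟨k-1, hk1⟩ hc
          simp only [Fin.val_mk] at this
          omega
        rw [hx] at hax
        simp only at hax
        have hcast : ((k-1 : ℕ) : ℝ) = (k:ℝ) - 1 := by
          have : (1:ℕ) ≤ k := h
          push_cast [Nat.cast_sub this]
          ring
        rw [hcast] at hax
        have hkR : (k:ℝ) ≤ N := by exact_mod_cast hkN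
        have key : (k:ℝ)/N - 1/N - 1/N ≤ ((k:ℝ)-1) * ((N:ℝ) - 2) / ((N:ℝ) * ((N:ℝ) - 1)) := by
          rw [show (k:ℝ)/N - 1/N - 1/N = ((k:ℝ)-2)/N by ring, div_le_div_iff₀ hn0 hD]
          nlinarith
        linarith
  -- uniform bound part 2
  have bound2 : ∀ a ∈ Set.Icc (0:ℝ) 1,
      |((Finset.univ.filter (fun i => f (x i) < a)).card : ℝ) / N - a| ≤ 2/N := by
    rintro a ⟨ha0, ha1⟩
    set k := (Finset.univ.filter (fun i => f (x i) < a)).card with hk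
    have hkN : k ≤ N := le_trans (Finset.card_le_univ _) (by simp)
    rw [abs_le]
    constructor
    · rcases eq_or_lt_of_le hkN with h | h
      · have : ((k:ℝ)) = N := by exact_mod_cast h
        rw [this, div_self (ne_of_gt hn0)]
        have : (0:ℝ) < 2/N := by positivity
        linarith
      · have hax : a ≤ f (x ⟨k, h⟩) := by
          by_contra hc
          push_neg at hc
          have := le_cnt (fun i => f (x i)) hmy a ⟨k, h⟩ hc
          simp only [Fin.val_mk] at this
          omega
        rw [hy] at hax
        simp only at hax
        have key : ((k:ℝ)) * ((N:ℝ) - 2) / ((N:ℝ) * ((N:ℝ) - 1)) ≤ (k:ℝ)/N := by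
          rw [div_le_div_iff₀ hD hn0]
          have hk0 : (0:ℝ) ≤ (k:ℝ) := by positivity
          nlinarith
        have h2N : (0:ℝ) < 2/N := by positivity
        linarith
    · rcases Nat.eq_zero_or_pos k with h | h
      · rw [h]
        have h1 : (0:ℝ) < 2/N := by positivity
        rw [Nat.cast_zero, zero_div]
        linarith
      · have hk1 : k - 1 < N := by omega
        have hax : f (x ⟨k-1, hk1⟩) < a := by
          by_contra hc
          push_neg at hc
          have := cnt_le (fun i => f (x i)) hmy a ⟨k-1, hk1⟩ hc
          simp only [Fin.val_mk] at this
          omega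
        rw [hy] at hax
        simp only at hax
        have hcast : ((k-1 : ℕ) : ℝ) = (k:ℝ) - 1 := by
          have : (1:ℕ) ≤ k := h
          push_cast [Nat.cast_sub this]
          ring
        rw [hcast] at hax
        have hkR : (k:ℝ) ≤ N := by exact_mod_cast hkN
        have key : (k:ℝ)/N - 2/N ≤ ((k:ℝ)-1) * ((N:ℝ) - 2) / ((N:ℝ) * ((N:ℝ) - 1)) := by
          rw [show (k:ℝ)/N - 2/N = ((k:ℝ)-2)/N by ring, div_le_div_iff₀ hn0 hD]
          nlinarith
        linarith
  have h1N : (0:ℝ) < 1/N := by positivity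
  have h2N : (0:ℝ) < 2/N := by positivity
  constructor
  · -- first part
    unfold starDiscP
    set S1 : Set ℝ := {d : ℝ | ∃ a ∈ Set.Icc (0:ℝ) 1,
      d = |((Finset.univ.filter (fun i => x i < a)).card : ℝ) / N - a|} with hS1
    have hne1 : S1.Nonempty := ⟨_, 0, by norm_num, rfl⟩
    have hub1 : ∀ d ∈ S1, d ≤ 1/N := by
      rintro d ⟨a, ha, rfl⟩
      exact bound1 a ha
    have hbdd1 : BddAbove S1 := ⟨1/N, hub1⟩
    have hmem1 : (1/(N:ℝ)) ∈ S1 := by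
      refine ⟨1/N, ⟨le_of_lt h1N, by rw [div_le_one hn0]; linarith⟩, ?_⟩
      have hemp : (Finset.univ.filter (fun i => x i < 1/(N:ℝ))) = ∅ := by
        rw [Finset.filter_eq_empty_iff]
        intro i _
        exact not_lt.mpr (hxge i)
      rw [hemp, Finset.card_empty, Nat.cast_zero, zero_div, zero_sub, abs_neg,
        abs_of_nonneg (le_of_lt h1N)]
    exact le_antisymm (csSup_le hne1 hub1) (le_csSup hbdd1 hmem1)
  · -- second part
    unfold starDiscP
    set S2 : Set ℝ := {d : ℝ | ∃ a ∈ Set.Icc (0:ℝ) 1,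
      d = |((Finset.univ.filter (fun i => f (x i) < a)).card : ℝ) / N - a|} with hS2
    have hne2 : S2.Nonempty := ⟨_, 0, by norm_num, rfl⟩
    have hub2 : ∀ d ∈ S2, d ≤ 2/N := by
      rintro d ⟨a, ha, rfl⟩
      exact bound2 a ha
    have hbdd2 : BddAbove S2 := ⟨2/N, hub2⟩
    refine le_antisymm (csSup_le hne2 hub2) ?_
    rw [Real.le_sSup_iff hbdd2 hne2]
    intro ε hε
    obtain ⟨δ, hδ0, hδ1, hδε⟩ : ∃ δ : ℝ, 0 < δ ∧ δ ≤ 1/(N:ℝ) ∧ δ < -ε := by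
      refine ⟨min (-ε) (2/N) / 2, ?_, ?_, ?_⟩
      · have h := lt_min (neg_pos.mpr hε) h2N
        linarith
      · have h := min_le_right (-ε) (2/(N:ℝ))
        linarith [show (2:ℝ)/N = 2*(1/N) from by ring]
      · have h := min_le_left (-ε) (2/(N:ℝ))
        linarith [neg_pos.mpr hε]
    have hNd : ((N:ℝ)-2)/N + 2/N = 1 := by field_simp; ring
    have h12 : (2:ℝ)/N = 2*(1/N) := by ring
    have hA0 : (0:ℝ) ≤ ((N:ℝ)-2)/N := by
      apply div_nonneg _ (le_of_lt hn0)
      linarith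
    have ha00 : (0:ℝ) ≤ ((N:ℝ)-2)/N + δ := by linarith
    have ha01 : ((N:ℝ)-2)/N + δ ≤ 1 := by linarith
    have hfull : (Finset.univ.filter (fun i => f (x i) < ((N:ℝ)-2)/N + δ)) = Finset.univ := by
      rw [Finset.filter_eq_self]
      intro i _
      rw [hy i]
      have hiN : (i : ℝ) ≤ (N:ℝ) - 1 := by
        have h1 := i.isLt
        have h2 : ((i:ℕ):ℝ) + 1 ≤ (N:ℝ) := by exact_mod_cast h1
        linarith
      have hi0 : (0:ℝ) ≤ (i:ℝ) := by positivity
      have key : (i : ℝ) * ((N:ℝ) - 2) / ((N:ℝ) * ((N:ℝ) - 1)) ≤ ((N:ℝ)-2)/N := by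
        rw [div_le_div_iff₀ hD hn0]
        nlinarith [mul_nonneg (mul_nonneg (sub_nonneg.mpr hiN)
          (by linarith : (0:ℝ) ≤ (N:ℝ)-2)) (le_of_lt hn0)]
      linarith
    refine ⟨_, ⟨((N:ℝ)-2)/N + δ, ⟨ha00, ha01⟩, rfl⟩, ?_⟩
    rw [hfull, Finset.card_univ, Fintype.card_fin, div_self (ne_of_gt hn0),
      abs_of_nonneg (by linarith : (0:ℝ) ≤ 1 - (((N:ℝ)-2)/N + δ))]
    linarith
end
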